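/- Let (a_i)_{i≥1} be real numbers with |a_i| ≤ ã_i where ã_i/(i−1)! is nondecreasing in i for i ≥ 1. Suppose A is a real number satisfying |A − ∑_{i=0}^{k} a_i/(g−m)^i| ≤ C_k/(g−m)^{k+1} for positive integers g, m, k with m ≤ k+1 ≤ g^{1/3}. Then |A − ∑_{t=0}^{k} m^t·b_t/g^t| ≤ (3C_k + 3k²·e^m·ã_k)/g^{k+1}, where b_0 = a_0 and b_t = ∑_{i=1}^{t} C(t−1, i−1)·m^{−i}·a_i for t ≥ 1. -/

import Mathlib

set_option maxHeartbeats 1000000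

open Finset in
lemma poly_id (y z : ℝ) (i : ℕ) : ∀ n : ℕ,
    y ^ (i + 1 + n) = (∑ j ∈ Finset.range (n + 1),
        (Nat.choose (i + j) i : ℝ) * z ^ j * y ^ (n - j)) * (y - z) ^ (i + 1)
      + ∑ s ∈ Finset.range (i + 1), (Nat.choose (i + 1 + n) s : ℝ) * z ^ (i + 1 + n - s) * (y - z) ^ s := by
  intro n
  induction n with
  | zero =>
      have h := add_pow (y - z) z (i + 1)
      rw [sub_add_cancel] at h
      rw [Nat.add_zero, h, Finset.sum_range_succ]
      rw [add_comm]
      congr 1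
      · simp
      · exact Finset.sum_congr rfl fun s hs => by ring
  | succ n ih =>
      have hy : y ^ (i + 1 + (n + 1)) = y * y ^ (i + 1 + n) := by ring
      have hA : (∑ j ∈ Finset.range (n + 1 + 1), (Nat.choose (i + j) i : ℝ) * z ^ j * y ^ (n + 1 - j))
          = y * (∑ j ∈ Finset.range (n + 1), (Nat.choose (i + j) i : ℝ) * z ^ j * y ^ (n - j))
            + (Nat.choose (i + 1 + n) i : ℝ) * z ^ (n + 1) := by
        rw [Finset.sum_range_succ, Finset.mul_sum]
        congr 1
        · apply Finset.sum_congr rfl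
          intro j hj
          have hj2 := Finset.mem_range.mp hj; have hj' : j ≤ n := by omega
          rw [show n + 1 - j = (n - j) + 1 from by omega, pow_succ]
          ring
        · rw [show i + (n + 1) = i + 1 + n from by omega]
          simp
      have hB : (∑ s ∈ Finset.range (i + 1), (Nat.choose (i + 1 + (n + 1)) s : ℝ) * z ^ (i + 1 + (n + 1) - s) * (y - z) ^ s)
          = y * (∑ s ∈ Finset.range (i + 1), (Nat.choose (i + 1 + n) s : ℝ) * z ^ (i + 1 + n - s) * (y - z) ^ s)
            - (Nat.choose (i + 1 + n) i : ℝ) * z ^ (n + 1) * (y - z) ^ (i + 1) := by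
        have e1 : y * (∑ s ∈ Finset.range (i + 1), (Nat.choose (i + 1 + n) s : ℝ) * z ^ (i + 1 + n - s) * (y - z) ^ s)
            = (∑ s ∈ Finset.range (i + 1), (Nat.choose (i + 1 + n) s : ℝ) * z ^ (i + 1 + n - s) * (y - z) ^ (s + 1))
              + ∑ s ∈ Finset.range (i + 1), (Nat.choose (i + 1 + n) s : ℝ) * z ^ (i + 1 + (n + 1) - s) * (y - z) ^ s := by
          rw [Finset.mul_sum, ← Finset.sum_add_distrib]
          apply Finset.sum_congr rfl
          intro s hs
          have hs2 := Finset.mem_range.mp hs; have hs' : s ≤ i := by omega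
          rw [show i + 1 + (n + 1) - s = (i + 1 + n - s) + 1 from by omega, pow_succ, pow_succ]
          ring
        rw [e1]
        rw [Finset.sum_range_succ (fun s => (Nat.choose (i + 1 + n) s : ℝ) * z ^ (i + 1 + n - s) * (y - z) ^ (s + 1))]
        rw [Finset.sum_range_succ' (fun s => (Nat.choose (i + 1 + n) s : ℝ) * z ^ (i + 1 + (n + 1) - s) * (y - z) ^ s)]
        rw [Finset.sum_range_succ' (fun s => (Nat.choose (i + 1 + (n + 1)) s : ℝ) * z ^ (i + 1 + (n + 1) - s) * (y - z) ^ s)]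
        have e2 : (∑ s ∈ Finset.range i, (Nat.choose (i + 1 + (n + 1)) (s + 1) : ℝ) * z ^ (i + 1 + (n + 1) - (s + 1)) * (y - z) ^ (s + 1))
            = (∑ s ∈ Finset.range i, (Nat.choose (i + 1 + n) s : ℝ) * z ^ (i + 1 + n - s) * (y - z) ^ (s + 1))
              + ∑ s ∈ Finset.range i, (Nat.choose (i + 1 + n) (s + 1) : ℝ) * z ^ (i + 1 + (n + 1) - (s + 1)) * (y - z) ^ (s + 1) := by
          rw [← Finset.sum_add_distrib]
          apply Finset.sum_congr rfl
          intro s hs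
          have hs' : s < i := Finset.mem_range.mp hs
          rw [show i + 1 + (n + 1) = (i + 1 + n) + 1 from by omega, Nat.choose_succ_succ]
          rw [show i + 1 + n + 1 - (s + 1) = i + 1 + n - s from by omega]
          push_cast
          ring
        rw [e2]
        rw [show i + 1 + n - i = n + 1 from by omega]
        rw [show Nat.choose (i + 1 + (n + 1)) 0 = Nat.choose (i + 1 + n) 0 from by simp]
        ring
      rw [hy, ih, hA, hB]
      ring

theorem expansion_base_shift (a aTilde : ℕ → ℝ) (A Ck : ℝ) (g m k : ℕ)
    (hm : 0 < m) (hk : 0 < k) (hg : 0 < g)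
    (h1 : m ≤ k + 1) (h2 : (k + 1 : ℝ) ≤ (g : ℝ) ^ ((1 : ℝ) / 3))
    (habs : ∀ i, |a i| ≤ aTilde i)
    (hmono : ∀ i j, 1 ≤ i → i ≤ j →
      aTilde i / Nat.factorial (i - 1) ≤ aTilde j / Nat.factorial (j - 1))
    (hexp : |A - ∑ i ∈ Finset.range (k + 1), a i / ((g : ℝ) - m) ^ i|
      ≤ Ck / ((g : ℝ) - m) ^ (k + 1)) :
    |A - ∑ t ∈ Finset.range (k + 1), (m : ℝ) ^ t *
        (if t = 0 then a 0 else
          ∑ i ∈ Finset.Icc 1 t, (Nat.choose (t - 1) (i - 1) : ℝ) * (m : ℝ) ^ (-(i : ℤ)) * a i)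
        / (g : ℝ) ^ t|
      ≤ (3 * Ck + 3 * (k : ℝ) ^ 2 * Real.exp m * aTilde k) / (g : ℝ) ^ (k + 1) := by
  -- numeric facts
  have hg0 : (0:ℝ) < (g:ℝ) := by exact_mod_cast hg
  have hw1 : (1:ℝ) ≤ (m:ℝ) := by exact_mod_cast hm
  have hmk1 : (m:ℝ) ≤ (k:ℝ) + 1 := by exact_mod_cast h1
  have hk1 : (2:ℝ) ≤ (k:ℝ) + 1 := by
    have : (1:ℝ) ≤ (k:ℝ) := by exact_mod_cast hk
    linarith
  have hcx0 : ((g:ℝ) ^ ((1:ℝ)/3)) ^ (3:ℕ) = (g:ℝ) := by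
    rw [← Real.rpow_natCast (_ ^ _), ← Real.rpow_mul hg0.le]
    norm_num
  have hc00 : 0 < (g:ℝ) ^ ((1:ℝ)/3) := Real.rpow_pos_of_pos hg0 _
  set c : ℝ := (g : ℝ) ^ ((1:ℝ)/3) with hcdef
  clear_value c
  set x : ℝ := (g : ℝ) with hxdef
  clear_value x
  set w : ℝ := (m : ℝ) with hwdef
  clear_value w
  set d : ℝ := x - w with hddef
  clear_value d
  have hc0 : 0 < c := hc00
  have hcx : c ^ (3:ℕ) = x := hcx0
  have hc2 : 2 ≤ c := le_trans hk1 h2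
  have hw_le : w ≤ c := by linarith
  have hkc : (k:ℝ) ≤ c := by linarith
  have hcsq : 4 ≤ c^2 := by nlinarith
  have hccube : 2*c^2 ≤ c^(3:ℕ) := by nlinarith [mul_nonneg (sq_nonneg c) (sub_nonneg.mpr hc2)]
  have hx8 : (8:ℝ) ≤ x := by nlinarith [pow_le_pow_left₀ (by norm_num : (0:ℝ) ≤ 2) hc2 3]
  have hmx : 4 * w ≤ x := by nlinarith [mul_le_mul_of_nonneg_right hcsq hc0.le]
  have hd0 : (0:ℝ) < d := by nlinarith [hddef]
  have hd34 : 3 * x ≤ 4 * d := by nlinarith [hddef]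
  have hkm : (k:ℝ)*w ≤ c^2 := by
    have := mul_le_mul hkc hw_le (by linarith) hc0.le
    nlinarith
  have hq : 3 * ((k:ℝ) * w) ≤ 2 * d := by linarith [hkm, hccube, hcx, hd34]
  have hw0 : 0 < w := by linarith
  have hxk0 : 0 < x ^ k := pow_pos hg0 k
  have hdk0 : 0 < d ^ (k+1) := pow_pos hd0 _
  -- x^(k+1) ≤ 3 d^(k+1)
  have hx3d : x ^ (k+1) ≤ 3 * d ^ (k+1) := by
    have hxt2 : x * (2*w/x) = 2*w := by field_simp
    have h1e := Real.add_one_le_exp (2*w/x)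
    have hxt : x + 2*w ≤ x * Real.exp (2*w/x) := by nlinarith [Real.exp_pos (2*w/x)]
    have hpow : (x + 2*w)^(k+1) ≤ (x * Real.exp (2*w/x))^(k+1) :=
      pow_le_pow_left₀ (by linarith) hxt _
    have hkt : ((k:ℝ)+1) * (2*w/x) ≤ 1 := by
      rw [mul_div_assoc']
      rw [div_le_one hg0]
      calc ((k:ℝ)+1) * (2*w) = 2*(((k:ℝ)+1)*w) := by ring
        _ ≤ 2*(c*c) := by nlinarith
        _ ≤ x := by nlinarith
    have hexpk : (Real.exp (2*w/x))^(k+1) ≤ 3 := by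
      rw [← Real.exp_nat_mul]
      calc Real.exp ((k+1 : ℕ) * (2*w/x)) ≤ Real.exp 1 := by
            apply Real.exp_le_exp.mpr
            push_cast
            exact hkt
        _ ≤ 3 := by have := Real.exp_one_lt_d9; linarith
    have hxd2 : x^2 ≤ d * (x + 2*w) := by nlinarith [hddef]
    have key : (x^(k+1))^2 ≤ 3 * d^(k+1) * x^(k+1) := by
      calc (x^(k+1))^2 = (x^2)^(k+1) := by ring
        _ ≤ (d * (x + 2*w))^(k+1) := pow_le_pow_left₀ (by positivity) hxd2 _
        _ = d^(k+1) * (x + 2*w)^(k+1) := mul_pow _ _ _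
        _ ≤ d^(k+1) * ((x * Real.exp (2*w/x))^(k+1)) := by
            apply mul_le_mul_of_nonneg_left hpow hdk0.le
        _ = d^(k+1) * x^(k+1) * (Real.exp (2*w/x))^(k+1) := by rw [mul_pow]; ring
        _ ≤ d^(k+1) * x^(k+1) * 3 := by
            apply mul_le_mul_of_nonneg_left hexpk (by positivity)
        _ = 3 * d^(k+1) * x^(k+1) := by ring
    have hxk1 : 0 < x^(k+1) := pow_pos hg0 _
    nlinarith [key, hxk1]
  -- polynomial key identity
  have key : ∀ i, 1 ≤ i → i ≤ k →
      x^k = (∑ t ∈ Finset.Icc i k, (Nat.choose (t-1) (i-1) : ℝ) * w^(t-i) * x^(k-t)) * d^i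
        + ∑ s ∈ Finset.range i, (Nat.choose k s : ℝ) * w^(k-s) * d^s := by
    intro i hi1 hik
    have h := poly_id x w (i-1) (k-i)
    rw [show i-1+1 = i from by omega] at h
    rw [show i+(k-i) = k from by omega] at h
    rw [← hddef] at h
    rw [h]
    congr 1
    · congr 1
      rw [show Finset.Icc i k = Finset.Ico i (k+1) from (Finset.Ico_add_one_right_eq_Icc i k)]
      rw [Finset.sum_Ico_eq_sum_range]
      rw [show k+1-i = k-i+1 from by omega]
      apply Finset.sum_congr rfl
      intro j hj
      rw [show i+j-1 = i-1+j from by omega]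
      rw [show i+j-i = j from by omega]
      rw [show k-(i+j) = k-i-j from by omega]
  have hxkne : x^k ≠ 0 := ne_of_gt hxk0
  have hdne : d ≠ 0 := ne_of_gt hd0
  have hdivkey : ∀ i, 1 ≤ i → i ≤ k →
      1/d^i = (∑ t ∈ Finset.Icc i k, (Nat.choose (t-1) (i-1) : ℝ) * w^(t-i) * x^(k-t))/x^k
        + (∑ s ∈ Finset.range i, (Nat.choose k s : ℝ) * w^(k-s) * d^s)/(x^k * d^i) := by
    intro i hi1 hik
    have h := key i hi1 hik
    field_simp
    linear_combination h
  have hfr : ∀ t, t ≤ k → x^(k-t)/x^k = 1/x^t := by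
    intro t ht
    rw [div_eq_div_iff (by positivity) (by positivity), one_mul, ← pow_add,
      show k-t+t = k from by omega]
  have hS1 : (∑ i ∈ Finset.range (k+1), a i / d^i)
      = a 0 + ∑ i ∈ Finset.Icc 1 k, a i * (1/d^i) := by
    rw [Finset.sum_range_succ']
    rw [show Finset.Icc 1 k = Finset.Ico 1 (k+1) from (Finset.Ico_add_one_right_eq_Icc 1 k),
      Finset.sum_Ico_eq_sum_range]
    rw [show k+1-1 = k from rfl, add_comm]
    congr 1
    · norm_num
    · apply Finset.sum_congr rfl
      intro j hj
      rw [show 1+j = j+1 from by omega, mul_one_div]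
  have hS2 : (∑ t ∈ Finset.range (k + 1), w ^ t *
        (if t = 0 then a 0 else
          ∑ i ∈ Finset.Icc 1 t, (Nat.choose (t - 1) (i - 1) : ℝ) * w ^ (-(i : ℤ)) * a i)
        / x ^ t)
      = a 0 + ∑ i ∈ Finset.Icc 1 k, a i *
          ((∑ t ∈ Finset.Icc i k, (Nat.choose (t-1) (i-1) : ℝ) * w^(t-i) * x^(k-t))/x^k) := by
    rw [Finset.sum_range_succ']
    rw [add_comm]
    congr 1
    · simp
    -- now the shifted sum
    have step1 : ∀ t ∈ Finset.range k, w ^ (t+1) *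
          (if t+1 = 0 then a 0 else
            ∑ i ∈ Finset.Icc 1 (t+1), (Nat.choose (t+1-1) (i-1) : ℝ) * w ^ (-(i : ℤ)) * a i)
          / x ^ (t+1)
        = ∑ i ∈ Finset.Icc 1 (t+1), (Nat.choose t (i-1) : ℝ) * w^(t+1-i) * a i / x^(t+1) := by
      intro t _
      rw [if_neg (Nat.succ_ne_zero t)]
      rw [Finset.mul_sum, Finset.sum_div]
      apply Finset.sum_congr rfl
      intro i hi
      have hi2 := Finset.mem_Icc.mp hi
      rw [zpow_neg, zpow_natCast]
      rw [pow_sub₀ w (ne_of_gt hw0) hi2.2]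
      rw [show t+1-1 = t from rfl]
      ring
    rw [Finset.sum_congr rfl step1]
    have step2 : (∑ t ∈ Finset.range k, ∑ i ∈ Finset.Icc 1 (t+1),
          (Nat.choose t (i-1) : ℝ) * w^(t+1-i) * a i / x^(t+1))
        = ∑ t ∈ Finset.Icc 1 k, ∑ i ∈ Finset.Icc 1 t,
          (Nat.choose (t-1) (i-1) : ℝ) * w^(t-i) * a i / x^t := by
      rw [show Finset.Icc 1 k = Finset.Ico 1 (k+1) from (Finset.Ico_add_one_right_eq_Icc 1 k),
        Finset.sum_Ico_eq_sum_range, show k+1-1 = k from rfl]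
      apply Finset.sum_congr rfl
      intro j hj
      rw [show 1+j = j+1 from by omega, show j+1-1 = j from rfl]
    rw [step2]
    rw [Finset.sum_comm' (t' := Finset.Icc 1 k) (s' := fun i => Finset.Icc i k)
      (by intro t i; simp only [Finset.mem_Icc]; omega)]
    apply Finset.sum_congr rfl
    intro i hi
    have hi2 := Finset.mem_Icc.mp hi
    rw [Finset.sum_div, Finset.mul_sum]
    apply Finset.sum_congr rfl
    intro s hs
    have hs2 := Finset.mem_Icc.mp hs
    have h := hfr s hs2.2
    have e : (Nat.choose (s-1) (i-1) : ℝ) * w^(s-i) * a i / x^s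
        = a i * ((Nat.choose (s-1) (i-1) : ℝ) * w^(s-i) * (1/x^s)) := by ring
    rw [e, ← h]
    ring
  -- choose step bound
  have hchoose_step : ∀ s, s + 1 ≤ k → Nat.choose k s ≤ k * Nat.choose k (s+1) := by
    intro s hs
    have h1 := Nat.choose_succ_right_eq k s
    have h2 : 1 ≤ k - s := by omega
    calc Nat.choose k s ≤ Nat.choose k s * (k - s) := Nat.le_mul_of_pos_right _ (by omega)
      _ = Nat.choose k (s+1) * (s+1) := h1.symm
      _ ≤ Nat.choose k (s+1) * k := Nat.mul_le_mul_left _ (by omega)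
      _ = k * Nat.choose k (s+1) := Nat.mul_comm _ _
  have hgeom_dom : ∀ i, 1 ≤ i → i ≤ k → ∀ j, j ≤ i-1 →
      (Nat.choose k (i-1-j) : ℝ) * (3*w)^j ≤ (Nat.choose k (i-1) : ℝ) * (2*d)^j := by
    intro i hi1 hik j
    induction j with
    | zero => simp
    | succ j ih =>
        intro hj1
        have h0 := ih (by omega)
        have hnat : Nat.choose k (i-1-(j+1)) ≤ k * Nat.choose k (i-1-j) := by
          have e : (i-1-(j+1)) + 1 = i-1-j := by omega
          rw [← e]
          exact hchoose_step _ (by omega)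
        have hnatR : (Nat.choose k (i-1-(j+1)) : ℝ) ≤ (k:ℝ) * Nat.choose k (i-1-j) := by
          exact_mod_cast hnat
        calc (Nat.choose k (i-1-(j+1)) : ℝ) * (3*w)^(j+1)
            ≤ ((k:ℝ) * Nat.choose k (i-1-j)) * (3*w)^(j+1) :=
              mul_le_mul_of_nonneg_right hnatR (by positivity)
          _ = (3*((k:ℝ)*w)) * ((Nat.choose k (i-1-j) : ℝ) * (3*w)^j) := by ring
          _ ≤ (2*d) * ((Nat.choose k (i-1) : ℝ) * (2*d)^j) := by
              apply mul_le_mul hq h0 (by positivity) (by linarith)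
          _ = (Nat.choose k (i-1) : ℝ) * (2*d)^(j+1) := by ring
  have hTbound : ∀ i, 1 ≤ i → i ≤ k →
      (∑ s ∈ Finset.range i, (Nat.choose k s : ℝ) * w^(k-s) * d^s)
        ≤ 3 * ((Nat.choose k (i-1) : ℝ) * w^(k+1-i) * d^(i-1)) := by
    intro i hi1 hik
    have hM0 : (0:ℝ) ≤ (Nat.choose k (i-1) : ℝ) * w^(k+1-i) * d^(i-1) := by positivity
    calc (∑ s ∈ Finset.range i, (Nat.choose k s : ℝ) * w^(k-s) * d^s)
        ≤ ∑ s ∈ Finset.range i, (2/3:ℝ)^(i-1-s) *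
            ((Nat.choose k (i-1) : ℝ) * w^(k+1-i) * d^(i-1)) := by
          apply Finset.sum_le_sum
          intro s hs
          have hsi : s ≤ i-1 := by have := Finset.mem_range.mp hs; omega
          have hg := hgeom_dom i hi1 hik (i-1-s) (by omega)
          rw [show i-1-(i-1-s) = s from by omega] at hg
          have key2 : (3:ℝ)^(i-1-s) * ((Nat.choose k s : ℝ)*w^(k-s)*d^s)
              ≤ 2^(i-1-s) * ((Nat.choose k (i-1) : ℝ)*w^(k+1-i)*d^(i-1)) := by
            have e1 : (3:ℝ)^(i-1-s) * ((Nat.choose k s : ℝ)*w^(k-s)*d^s)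
                = ((Nat.choose k s : ℝ)*(3*w)^(i-1-s)) * (w^(k+1-i)*d^s) := by
              rw [mul_pow, show w^(k-s) = w^(i-1-s) * w^(k+1-i) from by
                rw [← pow_add]; congr 1; omega]
              ring
            have e2 : (2:ℝ)^(i-1-s) * ((Nat.choose k (i-1) : ℝ)*w^(k+1-i)*d^(i-1))
                = ((Nat.choose k (i-1) : ℝ)*(2*d)^(i-1-s)) * (w^(k+1-i)*d^s) := by
              rw [mul_pow, show d^(i-1) = d^(i-1-s) * d^s from by
                rw [← pow_add]; congr 1; omega]
              ring
            rw [e1, e2]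
            exact mul_le_mul_of_nonneg_right hg (by positivity)
          rw [div_pow, div_mul_eq_mul_div, le_div_iff₀ (by positivity : (0:ℝ) < 3^(i-1-s))]
          calc (Nat.choose k s : ℝ)*w^(k-s)*d^s * 3^(i-1-s)
              = 3^(i-1-s) * ((Nat.choose k s : ℝ)*w^(k-s)*d^s) := by ring
            _ ≤ 2^(i-1-s) * ((Nat.choose k (i-1) : ℝ)*w^(k+1-i)*d^(i-1)) := key2
      _ = (∑ s ∈ Finset.range i, (2/3:ℝ)^(i-1-s)) *
            ((Nat.choose k (i-1) : ℝ) * w^(k+1-i) * d^(i-1)) := by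
          rw [Finset.sum_mul]
      _ = (∑ j ∈ Finset.range i, (2/3:ℝ)^j) *
            ((Nat.choose k (i-1) : ℝ) * w^(k+1-i) * d^(i-1)) := by
          rw [Finset.sum_range_reflect (fun j => (2/3:ℝ)^j) i]
      _ ≤ 3 * ((Nat.choose k (i-1) : ℝ) * w^(k+1-i) * d^(i-1)) := by
          apply mul_le_mul_of_nonneg_right _ hM0
          rw [geom_sum_eq (by norm_num : (2/3:ℝ) ≠ 1)]
          have h0 : (0:ℝ) ≤ (2/3:ℝ)^i := by positivity
          have e : ((2/3:ℝ)^i - 1)/(2/3 - 1) = 3*(1 - (2/3:ℝ)^i) := by ring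
          rw [e]
          linarith
  have haT0 : ∀ i, 0 ≤ aTilde i := fun i => le_trans (abs_nonneg _) (habs i)
  have hfac : ∀ i, 1 ≤ i → i ≤ k →
      aTilde i ≤ aTilde k * (Nat.factorial (i-1) : ℝ) / (Nat.factorial (k-1) : ℝ) := by
    intro i hi1 hik
    have h := hmono i k hi1 hik
    have hfi : (0:ℝ) < (Nat.factorial (i-1) : ℝ) := by exact_mod_cast Nat.factorial_pos _
    have hfk : (0:ℝ) < (Nat.factorial (k-1) : ℝ) := by exact_mod_cast Nat.factorial_pos _
    rw [div_le_div_iff₀ hfi hfk] at h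
    rw [le_div_iff₀ hfk]
    linarith
  have hfc : ∀ i, 1 ≤ i → i ≤ k →
      (Nat.factorial (i-1) : ℝ) * (Nat.choose k (i-1) : ℝ) * (Nat.factorial (k+1-i) : ℝ)
        = (Nat.factorial k : ℝ) := by
    intro i hi1 hik
    have h := Nat.choose_mul_factorial_mul_factorial (show i-1 ≤ k from by omega)
    rw [show k-(i-1) = k+1-i from by omega] at h
    have := congrArg (Nat.cast : ℕ → ℝ) h
    push_cast at this
    linarith
  have hkfac : (Nat.factorial k : ℝ) = (k:ℝ) * (Nat.factorial (k-1) : ℝ) := by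
    have h : Nat.factorial k = k * Nat.factorial (k-1) := by
      conv_lhs => rw [show k = (k-1)+1 from by omega]
      rw [Nat.factorial_succ, show k-1+1 = k from by omega]
    exact_mod_cast h
  have hterm : ∀ i, 1 ≤ i → i ≤ k →
      aTilde i * ((∑ s ∈ Finset.range i, (Nat.choose k s : ℝ) * w^(k-s) * d^s)/(x^k * d^i))
        ≤ (3 * aTilde k * (k:ℝ) / (x^k * d)) * (w^(k+1-i)/(Nat.factorial (k+1-i) : ℝ)) := by
    intro i hi1 hik
    have hfi : (0:ℝ) < (Nat.factorial (i-1) : ℝ) := by exact_mod_cast Nat.factorial_pos _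
    have hfk : (0:ℝ) < (Nat.factorial (k-1) : ℝ) := by exact_mod_cast Nat.factorial_pos _
    have hf' : (0:ℝ) < (Nat.factorial (k+1-i) : ℝ) := by exact_mod_cast Nat.factorial_pos _
    have hN3 := hTbound i hi1 hik
    have hNnn : (0:ℝ) ≤ ∑ s ∈ Finset.range i, (Nat.choose k s : ℝ) * w^(k-s) * d^s :=
      Finset.sum_nonneg fun s _ => by positivity
    have hdipos : (0:ℝ) < x^k * d^i := by positivity
    have hT1 : (∑ s ∈ Finset.range i, (Nat.choose k s : ℝ) * w^(k-s) * d^s)/(x^k * d^i)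
        ≤ 3*((Nat.choose k (i-1) : ℝ) * w^(k+1-i) * d^(i-1))/(x^k * d^i) := by
      gcongr
    have hmul : aTilde i * ((∑ s ∈ Finset.range i, (Nat.choose k s : ℝ) * w^(k-s) * d^s)/(x^k * d^i))
        ≤ (aTilde k * (Nat.factorial (i-1) : ℝ) / (Nat.factorial (k-1) : ℝ))
          * (3*((Nat.choose k (i-1) : ℝ) * w^(k+1-i) * d^(i-1))/(x^k * d^i)) :=
      mul_le_mul (hfac i hi1 hik) hT1 (div_nonneg hNnn hdipos.le)
        (div_nonneg (mul_nonneg (haT0 k) (by positivity)) (by positivity))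
    refine le_trans hmul (le_of_eq ?_)
    have hdi : d^i = d^(i-1)*d := by rw [← pow_succ]; congr 1; omega
    have hcc := hfc i hi1 hik
    rw [hdi, div_mul_div_comm, div_mul_div_comm,
      div_eq_div_iff (by positivity) (by positivity)]
    linear_combination (3*aTilde k*w^(k+1-i)*d^(i-1)*d*x^k) * hcc
      + (3*aTilde k*w^(k+1-i)*d^(i-1)*d*x^k) * hkfac
  -- reindex factorial sum
  have hrev : (∑ i ∈ Finset.Icc 1 k, w^(k+1-i)/(Nat.factorial (k+1-i) : ℝ))
      = ∑ j ∈ Finset.Icc 1 k, w^j/(Nat.factorial j : ℝ) := by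
    apply Finset.sum_nbij' (i := fun i => k+1-i) (j := fun j => k+1-j)
    · intro i hi; have := Finset.mem_Icc.mp hi; simp only [Finset.mem_Icc]; omega
    · intro j hj; have := Finset.mem_Icc.mp hj; simp only [Finset.mem_Icc]; omega
    · intro i hi; have := Finset.mem_Icc.mp hi; omega
    · intro j hj; have := Finset.mem_Icc.mp hj; omega
    · intro i hi; rfl
  have hSE0 : 0 ≤ ∑ j ∈ Finset.Icc 1 k, w^j/(Nat.factorial j : ℝ) :=
    Finset.sum_nonneg fun j _ => by positivity
  have hSE4 : 4 * (∑ j ∈ Finset.Icc 1 k, w^j/(Nat.factorial j : ℝ)) ≤ 3*(k:ℝ)*Real.exp w := by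
    rcases Nat.lt_or_ge k 2 with hk2 | hk2
    · have hk1' : k = 1 := by omega
      subst hk1'
      rw [Finset.Icc_self, Finset.sum_singleton]
      simp only [pow_one, Nat.factorial_one, Nat.cast_one, div_one, Nat.cast_one]
      have hquad := Real.quadratic_le_exp_of_nonneg (by linarith : (0:ℝ) ≤ w)
      nlinarith
    · have hSEe : (∑ j ∈ Finset.Icc 1 k, w^j/(Nat.factorial j : ℝ)) ≤ Real.exp w - 1 := by
        have hsum : (∑ j ∈ Finset.range (k+1), w^j/(Nat.factorial j : ℝ))
            = 1 + ∑ j ∈ Finset.Icc 1 k, w^j/(Nat.factorial j : ℝ) := by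
          rw [Finset.sum_range_succ', add_comm]
          congr 1
          · simp
          · rw [show Finset.Icc 1 k = Finset.Ico 1 (k+1) from (Finset.Ico_add_one_right_eq_Icc 1 k),
              Finset.sum_Ico_eq_sum_range, show k+1-1 = k from rfl]
            apply Finset.sum_congr rfl
            intro j hj
            rw [show 1+j = j+1 from by omega]
        have he := Real.sum_le_exp_of_nonneg (by linarith : (0:ℝ) ≤ w) (k+1)
        rw [hsum] at he
        linarith
      have hk2' : (2:ℝ) ≤ (k:ℝ) := by exact_mod_cast hk2
      have hexp1 : 1 ≤ Real.exp w := Real.one_le_exp (by linarith)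
      nlinarith [Real.exp_pos w]
  -- total tail bound
  have hsum : (∑ i ∈ Finset.Icc 1 k, aTilde i *
        ((∑ s ∈ Finset.range i, (Nat.choose k s : ℝ) * w^(k-s) * d^s)/(x^k * d^i)))
      ≤ (3 * aTilde k * (k:ℝ) / (x^k * d)) * ∑ j ∈ Finset.Icc 1 k, w^j/(Nat.factorial j : ℝ) := by
    calc (∑ i ∈ Finset.Icc 1 k, aTilde i *
          ((∑ s ∈ Finset.range i, (Nat.choose k s : ℝ) * w^(k-s) * d^s)/(x^k * d^i)))
        ≤ ∑ i ∈ Finset.Icc 1 k, (3 * aTilde k * (k:ℝ) / (x^k * d)) *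
            (w^(k+1-i)/(Nat.factorial (k+1-i) : ℝ)) := by
          apply Finset.sum_le_sum
          intro i hi
          have h2i := Finset.mem_Icc.mp hi
          exact hterm i h2i.1 h2i.2
      _ = (3 * aTilde k * (k:ℝ) / (x^k * d)) *
            ∑ i ∈ Finset.Icc 1 k, w^(k+1-i)/(Nat.factorial (k+1-i) : ℝ) := by
          rw [Finset.mul_sum]
      _ = (3 * aTilde k * (k:ℝ) / (x^k * d)) * ∑ j ∈ Finset.Icc 1 k, w^j/(Nat.factorial j : ℝ) := by
          rw [hrev]
  -- difference identity
  have hdiff : A - (a 0 + ∑ i ∈ Finset.Icc 1 k, a i *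
        ((∑ t ∈ Finset.Icc i k, (Nat.choose (t-1) (i-1) : ℝ) * w^(t-i) * x^(k-t))/x^k))
      = (A - ∑ i ∈ Finset.range (k+1), a i/d^i)
        + ∑ i ∈ Finset.Icc 1 k, a i *
            ((∑ s ∈ Finset.range i, (Nat.choose k s : ℝ) * w^(k-s) * d^s)/(x^k * d^i)) := by
    have e : (∑ i ∈ Finset.Icc 1 k, a i * (1/d^i))
        = (∑ i ∈ Finset.Icc 1 k, a i *
            ((∑ t ∈ Finset.Icc i k, (Nat.choose (t-1) (i-1) : ℝ) * w^(t-i) * x^(k-t))/x^k))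
          + ∑ i ∈ Finset.Icc 1 k, a i *
            ((∑ s ∈ Finset.range i, (Nat.choose k s : ℝ) * w^(k-s) * d^s)/(x^k * d^i)) := by
      rw [← Finset.sum_add_distrib]
      apply Finset.sum_congr rfl
      intro i hi
      have h2i := Finset.mem_Icc.mp hi
      rw [hdivkey i h2i.1 h2i.2]
      ring
    rw [hS1, e]
    ring
  have hCk0 : 0 ≤ Ck := by
    by_contra hneg
    push_neg at hneg
    have hneg2 : Ck/d^(k+1) < 0 := div_neg_of_neg_of_pos hneg hdk0
    linarith [abs_nonneg (A - ∑ i ∈ Finset.range (k+1), a i/d^i), hexp]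
  have habsY : |∑ i ∈ Finset.Icc 1 k, a i *
        ((∑ s ∈ Finset.range i, (Nat.choose k s : ℝ) * w^(k-s) * d^s)/(x^k * d^i))|
      ≤ ∑ i ∈ Finset.Icc 1 k, aTilde i *
        ((∑ s ∈ Finset.range i, (Nat.choose k s : ℝ) * w^(k-s) * d^s)/(x^k * d^i)) := by
    refine le_trans (Finset.abs_sum_le_sum_abs _ _) (Finset.sum_le_sum ?_)
    intro i hi
    have hTnn : 0 ≤ (∑ s ∈ Finset.range i, (Nat.choose k s : ℝ) * w^(k-s) * d^s)/(x^k * d^i) :=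
      div_nonneg (Finset.sum_nonneg fun s _ => by positivity) (by positivity)
    rw [abs_mul, abs_of_nonneg hTnn]
    exact mul_le_mul_of_nonneg_right (habs i) hTnn
  have hfin1 : Ck/d^(k+1) ≤ 3*Ck/x^(k+1) := by
    rw [div_le_div_iff₀ hdk0 (by positivity)]
    linarith [mul_le_mul_of_nonneg_left hx3d hCk0]
  have hfin2 : (3 * aTilde k * (k:ℝ) / (x^k * d)) * (∑ j ∈ Finset.Icc 1 k, w^j/(Nat.factorial j : ℝ))
      ≤ 3*(k:ℝ)^2*Real.exp w*aTilde k/x^(k+1) := by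
    have hSExd : (∑ j ∈ Finset.Icc 1 k, w^j/(Nat.factorial j : ℝ)) * x ≤ (k:ℝ) * Real.exp w * d := by
      have hke : (0:ℝ) ≤ 3*(k:ℝ)*Real.exp w := by positivity
      have hx3 : (0:ℝ) ≤ 3*x := by positivity
      have hp := mul_le_mul hSE4 hd34 hx3 hke
      linarith [hp]
    rw [div_mul_eq_mul_div, div_le_div_iff₀ (by positivity) (by positivity)]
    calc 3 * aTilde k * (k:ℝ) * (∑ j ∈ Finset.Icc 1 k, w^j/(Nat.factorial j : ℝ)) * x^(k+1)
        = (3*(k:ℝ)*aTilde k*x^k) * ((∑ j ∈ Finset.Icc 1 k, w^j/(Nat.factorial j : ℝ)) * x) := by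
          rw [pow_succ]; ring
      _ ≤ (3*(k:ℝ)*aTilde k*x^k) * ((k:ℝ) * Real.exp w * d) := by
          apply mul_le_mul_of_nonneg_left hSExd
          have hk0' : (0:ℝ) ≤ (k:ℝ) := by positivity
          have := haT0 k
          positivity
      _ = 3*(k:ℝ)^2*Real.exp w*aTilde k*(x^k*d) := by ring
  -- final assembly
  rw [hS2, hdiff]
  calc |(A - ∑ i ∈ Finset.range (k+1), a i/d^i)
        + ∑ i ∈ Finset.Icc 1 k, a i *
            ((∑ s ∈ Finset.range i, (Nat.choose k s : ℝ) * w^(k-s) * d^s)/(x^k * d^i))|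
      ≤ |A - ∑ i ∈ Finset.range (k+1), a i/d^i|
        + |∑ i ∈ Finset.Icc 1 k, a i *
            ((∑ s ∈ Finset.range i, (Nat.choose k s : ℝ) * w^(k-s) * d^s)/(x^k * d^i))| :=
        abs_add_le _ _
    _ ≤ Ck/d^(k+1) + (3 * aTilde k * (k:ℝ) / (x^k * d)) *
          (∑ j ∈ Finset.Icc 1 k, w^j/(Nat.factorial j : ℝ)) := by
        have := le_trans habsY hsum
        exact add_le_add hexp this
    _ ≤ 3*Ck/x^(k+1) + 3*(k:ℝ)^2*Real.exp w*aTilde k/x^(k+1) := add_le_add hfin1 hfin2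
    _ = (3*Ck + 3*(k:ℝ)^2*Real.exp w*aTilde k)/x^(k+1) := by rw [add_div]
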